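/- Let Ω ⊂ ℝⁿ be a bounded measurable set, let α > 1 with conjugate exponent α′ = α/(α−1), let w ∈ L^α(Ω) be a positive weight, and let p : Ω → [1, ∞) be a measurable exponent satisfying 1 ≤ p⁻ ≤ p(x) ≤ p⁺ < ∞ for almost every x ∈ Ω. Then for every f ∈ L^{α′ p⁺}(Ω), ‖f‖_{L^{p(·)}_w(Ω)} ≤ max( 1, (1 + |Ω|) · ‖w‖_{L^α(Ω)} ) · ‖f‖_{L^{α′ p⁺}(Ω)}. In particular, L^q(Ω) embeds continuously into L^{p(·)}_w(Ω) for every q ≥ α′ p⁺. -/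

import Mathlib

open MeasureTheory Set ENNReal

/-- The weighted Luxemburg norm
`‖f‖_{L^{p(·)}_w(Ω)} = inf {λ > 0 : ∫_Ω |f/λ|^{p(x)} w dx ≤ 1}`
(with the infimum of the empty set equal to `+∞`). -/
noncomputable def weightedLuxemburgNorm {n : ℕ} (Ω : Set (EuclideanSpace ℝ (Fin n)))
    (p w f : EuclideanSpace ℝ (Fin n) → ℝ) : ℝ≥0∞ :=
  sInf (ENNReal.ofReal ''
    {l : ℝ | 0 < l ∧ (∫⁻ x in Ω, ENNReal.ofReal (|f x / l| ^ p x * w x)) ≤ 1})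

/-- Let `Ω ⊂ ℝⁿ` be bounded measurable, `α > 1` with conjugate `α'`,
`w ∈ L^α(Ω)` a positive weight, and `p : Ω → [1,∞)` measurable with
`1 ≤ p⁻ ≤ p(x) ≤ p⁺ < ∞` a.e. Then for every `f ∈ L^{α'p⁺}(Ω)`,
`‖f‖_{L^{p(·)}_w(Ω)} ≤ max(1, (1+|Ω|)‖w‖_{L^α(Ω)}) ‖f‖_{L^{α'p⁺}(Ω)}`; in particular `L^q(Ω)`
embeds continuously into `L^{p(·)}_w(Ω)` for every `q ≥ α'p⁺`. -/
theorem Lq_embeds_weighted_variable_Lebesgue (n : ℕ) (Ω : Set (EuclideanSpace ℝ (Fin n)))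
    (hΩm : MeasurableSet Ω) (hΩb : Bornology.IsBounded Ω)
    (α α' : ℝ) (hα : 1 < α) (hα' : α' = α / (α - 1))
    (w : EuclideanSpace ℝ (Fin n) → ℝ) (hw0 : ∀ x ∈ Ω, 0 < w x) (hwm : Measurable w)
    (hwα : (∫⁻ x in Ω, ENNReal.ofReal (w x ^ α)) < ⊤)
    (p : EuclideanSpace ℝ (Fin n) → ℝ) (hpm : Measurable p)
    (pMinus pPlus : ℝ)
    (hpMinus : pMinus = essInf p (volume.restrict Ω))
    (hpPlus : pPlus = essSup p (volume.restrict Ω))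
    (hpm1 : 1 ≤ pMinus)
    (hae : ∀ᵐ x ∂(volume.restrict Ω), pMinus ≤ p x ∧ p x ≤ pPlus) :
    ∀ f : EuclideanSpace ℝ (Fin n) → ℝ, Measurable f →
      (∫⁻ x in Ω, ENNReal.ofReal (|f x| ^ (α' * pPlus))) < ⊤ →
      weightedLuxemburgNorm Ω p w f ≤
        max 1 ((1 + volume Ω) * (∫⁻ x in Ω, ENNReal.ofReal (w x ^ α)) ^ (1 / α)) *
          (∫⁻ x in Ω, ENNReal.ofReal (|f x| ^ (α' * pPlus))) ^ (1 / (α' * pPlus)) := by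
  intro f hfm hfq
  set q := α' * pPlus with hqdef
  set I := ∫⁻ x in Ω, ENNReal.ofReal (|f x| ^ q) with hIdef
  set Iw := ∫⁻ x in Ω, ENNReal.ofReal (w x ^ α) with hIwdef
  set M : ℝ≥0∞ := max 1 ((1 + volume Ω) * Iw ^ (1 / α)) with hMdef
  have key : ∀ l : ℝ, 0 < l →
      (∫⁻ x in Ω, ENNReal.ofReal (|f x / l| ^ p x * w x)) ≤ 1 →
      weightedLuxemburgNorm Ω p w f ≤ ENNReal.ofReal l := fun l hl hmod =>
    sInf_le (Set.mem_image_of_mem _ ⟨hl, hmod⟩)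
  have hnorm0 : (∀ l : ℝ, 0 < l →
      (∫⁻ x in Ω, ENNReal.ofReal (|f x / l| ^ p x * w x)) = 0) →
      weightedLuxemburgNorm Ω p w f = 0 := by
    intro hz
    refine le_antisymm ?_ (zero_le)
    refine ENNReal.le_of_forall_pos_le_add fun ε hε _ => ?_
    rw [zero_add]
    have hε' : (0:ℝ) < (ε:ℝ) := by exact_mod_cast hε
    have := key (ε : ℝ) hε' (by rw [hz _ hε']; exact zero_le_one)
    simpa using this
  by_cases hΩ0 : volume Ω = 0
  · rw [hnorm0 fun l hl => by rw [Measure.restrict_eq_zero.mpr hΩ0, lintegral_zero_measure]]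
    exact zero_le
  have hrne : (volume.restrict Ω) ≠ 0 := by
    simpa [Measure.restrict_eq_zero] using hΩ0
  have hconj : α.HolderConjugate α' := (Real.holderConjugate_iff_eq_conjExponent hα).2 hα'
  have hα'1 : 1 < α' := hconj.symm.lt
  have hpP1 : 1 ≤ pPlus := by
    have : (ae (volume.restrict Ω)).NeBot := ae_neBot.mpr hrne
    obtain ⟨x, hx1, hx2⟩ := hae.exists
    linarith
  have hq0 : 0 < q := by rw [hqdef]; nlinarith
  by_cases hI0 : I = 0
  · refine le_trans (le_of_eq (hnorm0 fun l hl => ?_)) (zero_le)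
    have hm : Measurable fun x => ENNReal.ofReal (|f x| ^ q) :=
      (hfm.abs.pow measurable_const).ennreal_ofReal
    have hfz : ∀ᵐ x ∂(volume.restrict Ω), f x = 0 := by
      have h0 := (lintegral_eq_zero_iff hm).mp (hIdef ▸ hI0)
      filter_upwards [h0] with x hx
      simp only [Pi.zero_apply, ENNReal.ofReal_eq_zero] at hx
      by_contra hne
      have : 0 < |f x| ^ q := Real.rpow_pos_of_pos (abs_pos.mpr hne) q
      linarith
    rw [← lintegral_zero]
    apply lintegral_congr_ae
    filter_upwards [hfz, hae] with x hx hpx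
    rw [hx, zero_div, abs_zero, Real.zero_rpow (by linarith [hpx.1] : p x ≠ 0), zero_mul,
      ENNReal.ofReal_zero]
  -- main case
  have hItop : I ≠ ⊤ := hfq.ne
  set N := I ^ (1 / q) with hNdef
  have hN0 : N ≠ 0 := by
    simp only [hNdef, Ne, ENNReal.rpow_eq_zero_iff, not_or, not_and]
    constructor
    · intro h; exact absurd h hI0
    · intro h; exfalso; exact hItop h
  have hNtop : N ≠ ⊤ := (ENNReal.rpow_lt_top_of_nonneg (by positivity) hItop).ne
  have hΩtop : volume Ω ≠ ⊤ := hΩb.measure_lt_top.ne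
  have hIwr_top : Iw ^ (1 / α) ≠ ⊤ := (ENNReal.rpow_lt_top_of_nonneg (by positivity) hwα.ne).ne
  have hMtop : M ≠ ⊤ := by
    rw [hMdef]
    refine (max_lt one_lt_top ?_).ne
    exact ENNReal.mul_lt_top (by
      exact (ENNReal.add_lt_top.mpr ⟨one_lt_top, hΩtop.lt_top⟩)) hIwr_top.lt_top
  have hM1 : (1:ℝ≥0∞) ≤ M := le_max_left _ _
  have hM0 : M ≠ 0 := (zero_lt_one.trans_le hM1).ne'
  set lam := (M * N).toReal with hlamdef
  have hMN_top : M * N ≠ ⊤ := ENNReal.mul_ne_top hMtop hNtop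
  have hlam0 : 0 < lam := ENNReal.toReal_pos (mul_ne_zero hM0 hN0) hMN_top
  have hoflam : ENNReal.ofReal lam = M * N := ENNReal.ofReal_toReal hMN_top
  set G : EuclideanSpace ℝ (Fin n) → ℝ≥0∞ := fun x => ENNReal.ofReal |f x| * N⁻¹ with hGdef
  set W' : EuclideanSpace ℝ (Fin n) → ℝ≥0∞ := fun x => ENNReal.ofReal (w x) with hWdef
  have hGm : Measurable G := hfm.abs.ennreal_ofReal.mul measurable_const
  have hW'm : Measurable W' := hwm.ennreal_ofReal
  have hmod : (∫⁻ x in Ω, ENNReal.ofReal (|f x / lam| ^ p x * w x)) ≤ 1 := by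
    have step1 : (∫⁻ x in Ω, ENNReal.ofReal (|f x / lam| ^ p x * w x))
        ≤ M⁻¹ * ∫⁻ x in Ω, G x ^ p x * W' x := by
      rw [← lintegral_const_mul' _ _ (ENNReal.inv_ne_top.mpr hM0)]
      apply lintegral_mono_ae
      filter_upwards [hae, ae_restrict_mem hΩm] with x hpx hxΩ
      obtain ⟨hx1, hx2⟩ := hpx
      have hp1 : (1:ℝ) ≤ p x := le_trans hpm1 hx1
      have hw' : 0 ≤ w x := (hw0 x hxΩ).le
      have e1 : ENNReal.ofReal (|f x / lam| ^ p x * w x)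
          = (ENNReal.ofReal (|f x| / lam)) ^ p x * W' x := by
        rw [ENNReal.ofReal_mul (by positivity), abs_div, abs_of_pos hlam0,
          ENNReal.ofReal_rpow_of_nonneg (by positivity) (by linarith)]
      have e2 : ENNReal.ofReal (|f x| / lam) = G x * M⁻¹ := by
        rw [ENNReal.ofReal_div_of_pos hlam0, hoflam, hGdef]
        rw [div_eq_mul_inv, ENNReal.mul_inv (Or.inl hM0) (Or.inl hMtop)]
        ring
      rw [e1, e2, ENNReal.mul_rpow_of_nonneg _ _ (by linarith : (0:ℝ) ≤ p x),
        ENNReal.inv_rpow]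
      have hMp : (M ^ p x)⁻¹ ≤ M⁻¹ := by
        rw [ENNReal.inv_le_inv]
        calc M = M ^ (1:ℝ) := (ENNReal.rpow_one M).symm
          _ ≤ M ^ p x := ENNReal.rpow_le_rpow_of_exponent_le hM1 hp1
      calc G x ^ p x * (M ^ p x)⁻¹ * W' x ≤ G x ^ p x * M⁻¹ * W' x := by gcongr
        _ = M⁻¹ * (G x ^ p x * W' x) := by ring
    have step2 : (∫⁻ x in Ω, G x ^ p x * W' x)
        ≤ (∫⁻ x in Ω, (G x ^ p x) ^ α') ^ (1 / α') * (∫⁻ x in Ω, W' x ^ α) ^ (1 / α) := by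
      have := ENNReal.lintegral_mul_le_Lp_mul_Lq (volume.restrict Ω) hconj.symm
        ((hGm.pow hpm).aemeasurable) hW'm.aemeasurable
      simpa [Pi.mul_apply] using this
    have hGq : (∫⁻ x in Ω, G x ^ q) = 1 := by
      have e : ∀ x, G x ^ q = ENNReal.ofReal (|f x| ^ q) * I⁻¹ := by
        intro x
        rw [hGdef]
        rw [ENNReal.mul_rpow_of_nonneg _ _ hq0.le, ENNReal.inv_rpow,
          ENNReal.ofReal_rpow_of_nonneg (abs_nonneg _) hq0.le]
        congr 2
        rw [hNdef, ← ENNReal.rpow_mul, one_div, inv_mul_cancel₀ hq0.ne', ENNReal.rpow_one]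
      simp_rw [e]
      rw [lintegral_mul_const' _ _ (ENNReal.inv_ne_top.mpr hI0), ← hIdef,
        ENNReal.mul_inv_cancel hI0 hItop]
    have step3 : (∫⁻ x in Ω, (G x ^ p x) ^ α') ≤ volume Ω + 1 := by
      have hb : (∫⁻ x in Ω, (G x ^ p x) ^ α') ≤ ∫⁻ x in Ω, (1 + G x ^ q) := by
        apply lintegral_mono_ae
        filter_upwards [hae] with x hpx
        obtain ⟨hx1, hx2⟩ := hpx
        rw [← ENNReal.rpow_mul]
        rcases le_total (G x) 1 with h | h
        · exact (ENNReal.rpow_le_one h (by nlinarith)).trans le_self_add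
        · refine (ENNReal.rpow_le_rpow_of_exponent_le h ?_).trans le_add_self
          rw [hqdef]; nlinarith
      rw [lintegral_add_left measurable_const, lintegral_const, hGq] at hb
      simpa [Measure.restrict_apply_univ] using hb
    have step5 : (∫⁻ x in Ω, W' x ^ α) = Iw := by
      rw [hIwdef]
      apply lintegral_congr_ae
      filter_upwards [ae_restrict_mem hΩm] with x hxΩ
      rw [hWdef, ← ENNReal.ofReal_rpow_of_nonneg (hw0 x hxΩ).le (by linarith)]
    have step4 : ((volume Ω + 1) : ℝ≥0∞) ^ (1 / α') ≤ 1 + volume Ω := by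
      calc ((volume Ω + 1) : ℝ≥0∞) ^ (1 / α') ≤ (volume Ω + 1) ^ (1:ℝ) :=
            ENNReal.rpow_le_rpow_of_exponent_le le_add_self
              (by rw [div_le_one (by linarith)]; linarith)
        _ = 1 + volume Ω := by rw [ENNReal.rpow_one, add_comm]
    calc (∫⁻ x in Ω, ENNReal.ofReal (|f x / lam| ^ p x * w x))
        ≤ M⁻¹ * ∫⁻ x in Ω, G x ^ p x * W' x := step1
      _ ≤ M⁻¹ * ((volume Ω + 1) ^ (1 / α') * Iw ^ (1 / α)) := by
          gcongr
          refine step2.trans ?_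
          rw [step5]
          exact mul_le_mul' (ENNReal.rpow_le_rpow step3 (by positivity)) le_rfl
      _ ≤ M⁻¹ * M := by
          gcongr
          calc ((volume Ω + 1) : ℝ≥0∞) ^ (1 / α') * Iw ^ (1 / α)
              ≤ (1 + volume Ω) * Iw ^ (1 / α) := by gcongr
            _ ≤ M := le_max_right _ _
      _ = 1 := ENNReal.inv_mul_cancel hM0 hMtop
  calc weightedLuxemburgNorm Ω p w f ≤ ENNReal.ofReal lam := key lam hlam0 hmod
    _ = M * N := hoflam
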